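/- Let n ≥ 3 and Ω ⊆ ℝⁿ open. A positive continuous function u on Ω is a viscosity subsolution of λ(A^u) ∈ ∂Γ (in the sense that test functions φ touching u from above at x₀ satisfy λ(A^φ(x₀)) ∈ ℝⁿ∖Γ) if and only if w := u^(-2/(n-2)) is a viscosity supersolution of λ(A_w) ∈ ∂Γ (test functions ψ touching w from below at x₀ satisfy λ(A_ψ(x₀)) ∈ ℝⁿ∖Γ). -/

import Mathlib

open scoped BigOperators
noncomputable section

abbrev Euc (n : ℕ) := EuclideanSpace ℝ (Fin n)

/-- First partial derivative of `f` at `x` in direction `i`. -/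
def pd {n : ℕ} (f : Euc n → ℝ) (x : Euc n) (i : Fin n) : ℝ :=
  fderiv ℝ f x (EuclideanSpace.single i 1)

/-- Second partial derivative (Hessian entry) of `f` at `x`. -/
def hess {n : ℕ} (f : Euc n → ℝ) (x : Euc n) (i j : Fin n) : ℝ :=
  fderiv ℝ (fun y => fderiv ℝ f y (EuclideanSpace.single i 1)) x (EuclideanSpace.single j 1)

/-- The conformal Hessian $A_w$ as a matrix. -/
def AW (n : ℕ) (φ : Euc n → ℝ) (x : Euc n) : Matrix (Fin n) (Fin n) ℝ :=
  Matrix.of fun i j =>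
    φ x * hess φ x i j - ((∑ k, (pd φ x k)^2)/2) * (if i = j then 1 else 0)

/-- The conformal Hessian $A^u$ as a matrix. -/
def AU (n : ℕ) (φ : Euc n → ℝ) (x : Euc n) : Matrix (Fin n) (Fin n) ℝ :=
  Matrix.of fun i j =>
    -(2/((n:ℝ)-2)) * φ x ^ (-((n:ℝ)+2)/((n:ℝ)-2)) * hess φ x i j
    + (2*(n:ℝ)/((n:ℝ)-2)^2) * φ x ^ (-(2*(n:ℝ))/((n:ℝ)-2)) * pd φ x i * pd φ x j
    - (2/((n:ℝ)-2)^2) * φ x ^ (-(2*(n:ℝ))/((n:ℝ)-2)) * (∑ k, (pd φ x k)^2)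
        * (if i = j then 1 else 0)

section Aux

open Filter Real

lemma pd_congr {n : ℕ} {f g : Euc n → ℝ} {x : Euc n} (h : f =ᶠ[nhds x] g) :
    pd f x = pd g x := by
  funext i; unfold pd; rw [h.fderiv_eq]

lemma hess_congr {n : ℕ} {f g : Euc n → ℝ} {x : Euc n} (h : f =ᶠ[nhds x] g) :
    hess f x = hess g x := by
  funext i j; unfold hess
  have h2 : (fun y => fderiv ℝ f y (EuclideanSpace.single i 1))
      =ᶠ[nhds x] (fun y => fderiv ℝ g y (EuclideanSpace.single i 1)) := by
    filter_upwards [h.fderiv (𝕜 := ℝ)] with y hy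
    simp only [hy]
  rw [h2.fderiv_eq]

lemma AU_congr {n : ℕ} {f g : Euc n → ℝ} {x : Euc n} (h : f =ᶠ[nhds x] g) :
    AU n f x = AU n g x := by
  unfold AU; rw [pd_congr h, hess_congr h, h.self_of_nhds]

lemma AW_congr {n : ℕ} {f g : Euc n → ℝ} {x : Euc n} (h : f =ᶠ[nhds x] g) :
    AW n f x = AW n g x := by
  unfold AW; rw [pd_congr h, hess_congr h, h.self_of_nhds]

lemma eig_congr {n : ℕ} {M M' : Matrix (Fin n) (Fin n) ℝ} (e : M = M')
    (h : M.IsHermitian) (h' : M'.IsHermitian) : h.eigenvalues = h'.eigenvalues := by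
  subst e; rfl

lemma pd_rpow {n : ℕ} {ψ : Euc n → ℝ} (hψ : ContDiff ℝ 2 ψ) {x : Euc n}
    (hx : ψ x ≠ 0) (p : ℝ) (i : Fin n) :
    pd (fun y => ψ y ^ p) x i = p * ψ x ^ (p-1) * pd ψ x i := by
  have hd : HasFDerivAt ψ (fderiv ℝ ψ x) x :=
    (hψ.differentiable two_ne_zero x).hasFDerivAt
  unfold pd
  rw [(hd.rpow_const (Or.inl hx)).fderiv]
  simp [mul_assoc]

lemma hess_rpow {n : ℕ} {ψ : Euc n → ℝ} (hψ : ContDiff ℝ 2 ψ) {x : Euc n}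
    (hx : 0 < ψ x) (p : ℝ) (i j : Fin n) :
    hess (fun y => ψ y ^ p) x i j
      = p*(p-1) * ψ x ^ (p-2) * pd ψ x i * pd ψ x j + p * ψ x ^ (p-1) * hess ψ x i j := by
  have hev : ∀ᶠ y in nhds x, 0 < ψ y :=
    (hψ.continuous.continuousAt).eventually (eventually_gt_nhds hx)
  have heq : (fun y => fderiv ℝ (fun z => ψ z ^ p) y (EuclideanSpace.single i 1))
      =ᶠ[nhds x] fun y => p * ψ y ^ (p-1) * fderiv ℝ ψ y (EuclideanSpace.single i 1) := by
    filter_upwards [hev] with y hy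
    have hd : HasFDerivAt ψ (fderiv ℝ ψ y) y :=
      (hψ.differentiable two_ne_zero y).hasFDerivAt
    rw [(hd.rpow_const (Or.inl hy.ne')).fderiv]
    simp [mul_assoc]
  unfold hess
  rw [heq.fderiv_eq]
  have hdx : HasFDerivAt ψ (fderiv ℝ ψ x) x :=
    (hψ.differentiable two_ne_zero x).hasFDerivAt
  have ha : HasFDerivAt (fun y => p * ψ y ^ (p-1))
      (p • (((p-1) * ψ x ^ (p-1-1)) • fderiv ℝ ψ x)) x :=
    (hdx.rpow_const (Or.inl hx.ne')).const_mul p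
  have hb : DifferentiableAt ℝ (fun y => fderiv ℝ ψ y (EuclideanSpace.single i 1)) x := by
    have h1 : ContDiff ℝ 1 (fun y => fderiv ℝ ψ y) := hψ.fderiv_right (le_refl 2)
    exact ((h1.clm_apply contDiff_const).differentiable one_ne_zero).differentiableAt
  have hprod : HasFDerivAt (fun y => p * ψ y ^ (p-1) * fderiv ℝ ψ y (EuclideanSpace.single i 1)) _ x :=
    ha.mul hb.hasFDerivAt
  rw [hprod.fderiv]
  have hp2 : p - 1 - 1 = p - 2 := by ring
  simp only [ContinuousLinearMap.add_apply, ContinuousLinearMap.smul_apply, smul_eq_mul, hp2]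
  simp only [pd, hess]
  ring

lemma AU_rpow_eq_AW {n : ℕ} (hn : 3 ≤ n) {ψ : Euc n → ℝ} (hψ : ContDiff ℝ 2 ψ)
    {x : Euc n} (hx : 0 < ψ x) {p₀ : ℝ} (hp₀ : p₀ = -((n:ℝ)-2)/2) :
    AU n (fun y => ψ y ^ p₀) x = AW n ψ x := by
  subst hp₀
  have hN : (2:ℝ) < (n:ℝ) := by exact_mod_cast Nat.lt_of_lt_of_le (by norm_num) hn
  set N := (n:ℝ) with hNdef
  have hN2 : N - 2 ≠ 0 := sub_ne_zero.mpr (ne_of_gt hN)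
  set p : ℝ := -(N-2)/2 with hp
  set s := ψ x with hs
  have hpd : ∀ i, pd (fun y => ψ y ^ p) x i = p * s ^ (p-1) * pd ψ x i :=
    fun i => pd_rpow hψ hx.ne' p i
  have hhess : ∀ i j, hess (fun y => ψ y ^ p) x i j
      = p*(p-1) * s ^ (p-2) * pd ψ x i * pd ψ x j + p * s ^ (p-1) * hess ψ x i j :=
    fun i j => hess_rpow hψ hx p i j
  have hsum : ∑ k, (pd (fun y => ψ y ^ p) x k)^2
      = (p * s ^ (p-1))^2 * ∑ k, (pd ψ x k)^2 := by
    rw [Finset.mul_sum]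
    exact Finset.sum_congr rfl fun k _ => by rw [hpd k]; ring
  ext i j
  simp only [AU, AW, Matrix.of_apply]
  rw [hhess i j, hpd i, hpd j, hsum]
  have E1 : (s ^ p) ^ (-(N+2)/(N-2)) = s ^ ((N+2)/2) := by
    rw [← Real.rpow_mul hx.le]
    congr 1
    field_simp
    ring
  have E2 : (s ^ p) ^ (-(2*N)/(N-2)) = s ^ N := by
    rw [← Real.rpow_mul hx.le]
    congr 1
    field_simp
    ring
  rw [E1, E2]
  have A1 : s ^ ((N+2)/2) * s ^ (p-1) = s := by
    rw [← Real.rpow_add hx, show (N+2)/2 + (p-1) = 1 by rw [hp]; ring, Real.rpow_one]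
  have A2 : s ^ ((N+2)/2) * s ^ (p-2) = 1 := by
    rw [← Real.rpow_add hx, show (N+2)/2 + (p-2) = 0 by rw [hp]; ring, Real.rpow_zero]
  have A3 : s ^ N * (s ^ (p-1) * s ^ (p-1)) = 1 := by
    rw [← Real.rpow_add hx, ← Real.rpow_add hx,
      show N + ((p-1) + (p-1)) = 0 by rw [hp]; ring, Real.rpow_zero]
  have c1p : -(2/(N-2)) * p = 1 := by rw [hp]; field_simp
  have c2p : (2*N/(N-2)^2) * p^2 = N/2 := by rw [hp]; field_simp
  have c3p : (2/(N-2)^2) * p^2 = 1/2 := by rw [hp]; field_simp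
  have hp1 : p - 1 = -N/2 := by rw [hp]; ring
  set ai := pd ψ x i
  set aj := pd ψ x j
  set S := ∑ k, (pd ψ x k)^2
  set H := hess ψ x i j
  set d : ℝ := if i = j then 1 else 0
  linear_combination (-(2/(N-2))*p*(p-1)*ai*aj) * A2 + (-(2/(N-2))*p*H) * A1
    + ((2*N/(N-2)^2)*p^2*ai*aj - (2/(N-2)^2)*p^2*S*d) * A3
    + ((p-1)*ai*aj + s*H) * c1p + (ai*aj) * c2p + (-(S*d)) * c3p + (ai*aj) * hp1

/-- Smooth positive modification equal to the identity on `[ε, ∞)`. -/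
def hAux (ε : ℝ) (t : ℝ) : ℝ :=
  ε/2 + (t - ε/2) * Real.smoothTransition ((t - ε/2)/(ε/2))

lemma hAux_contDiff (ε : ℝ) : ContDiff ℝ 2 (hAux ε) := by
  unfold hAux
  exact contDiff_const.add ((contDiff_id.sub contDiff_const).mul
    ((Real.smoothTransition.contDiff (n := 2)).comp
      ((contDiff_id.sub contDiff_const).div_const _)))

lemma hAux_pos {ε : ℝ} (hε : 0 < ε) (t : ℝ) : 0 < hAux ε t := by
  unfold hAux
  rcases le_or_gt (ε/2) t with h | h
  · have h0 : (0:ℝ) ≤ Real.smoothTransition ((t - ε/2)/(ε/2)) :=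
      Real.smoothTransition.nonneg _
    have h1 : (0:ℝ) ≤ (t - ε/2) * Real.smoothTransition ((t - ε/2)/(ε/2)) :=
      mul_nonneg (by linarith) h0
    linarith
  · rw [Real.smoothTransition.zero_of_nonpos]
    · linarith
    · apply div_nonpos_of_nonpos_of_nonneg <;> linarith

lemma hAux_eq {ε : ℝ} (hε : 0 < ε) {t : ℝ} (ht : ε ≤ t) : hAux ε t = t := by
  unfold hAux
  rw [Real.smoothTransition.one_of_one_le]
  · ring
  · rw [le_div_iff₀ (by linarith)]
    linarith

end Aux

theorem stmt17 (n : ℕ) (hn : 3 ≤ n) (Γ : Set (Fin n → ℝ))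
    (hopen : IsOpen Γ) (hconv : Convex ℝ Γ)
    (hcone : ∀ lam ∈ Γ, ∀ c : ℝ, 0 < c → c • lam ∈ Γ)
    (hsymm : ∀ lam ∈ Γ, ∀ σ : Equiv.Perm (Fin n), lam ∘ σ ∈ Γ)
    (hΓn : {lam : Fin n → ℝ | ∀ i, 0 < lam i} ⊆ Γ)
    (hΓ1 : Γ ⊆ {lam : Fin n → ℝ | 0 < ∑ i, lam i})
    (Ω : Set (Euc n)) (hΩ : IsOpen Ω) (u : Euc n → ℝ)
    (hu : ContinuousOn u Ω) (hpos : ∀ x ∈ Ω, 0 < u x)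
    (w : Euc n → ℝ) (hwdef : w = fun x => u x ^ (-(2:ℝ)/((n:ℝ)-2))) :
    (∀ x₀ ∈ Ω, ∀ φ : Euc n → ℝ, ContDiff ℝ 2 φ → u x₀ = φ x₀ →
      (∀ᶠ x in nhds x₀, u x ≤ φ x) →
      ∀ h : (AU n φ x₀).IsHermitian, h.eigenvalues ∉ Γ) ↔
    (∀ x₀ ∈ Ω, ∀ ψ : Euc n → ℝ, ContDiff ℝ 2 ψ → w x₀ = ψ x₀ →
      (∀ᶠ x in nhds x₀, ψ x ≤ w x) →
      ∀ h : (AW n ψ x₀).IsHermitian, h.eigenvalues ∉ Γ) := by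
  have hN : (2:ℝ) < (n:ℝ) := by exact_mod_cast Nat.lt_of_lt_of_le (by norm_num) hn
  have hN2 : (n:ℝ) - 2 ≠ 0 := sub_ne_zero.mpr (ne_of_gt hN)
  obtain ⟨q, hq⟩ : ∃ q : ℝ, q = -(2:ℝ)/((n:ℝ)-2) := ⟨_, rfl⟩
  obtain ⟨p, hp⟩ : ∃ p : ℝ, p = -((n:ℝ)-2)/2 := ⟨_, rfl⟩
  have hqp : q * p = 1 := by rw [hq, hp]; field_simp
  have hqneg : q ≤ 0 := by
    rw [hq]; apply div_nonpos_of_nonpos_of_nonneg <;> linarith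
  have hpneg : p ≤ 0 := by
    rw [hp]; apply div_nonpos_of_nonpos_of_nonneg <;> linarith
  have hwq : ∀ y, w y = u y ^ q := by intro y; rw [hwdef, hq]
  constructor
  · -- subsolution for u implies supersolution for w
    intro H x₀ hx₀ ψ hψC hψval hψle hHerm
    have hux : 0 < u x₀ := hpos x₀ hx₀
    have hψx : 0 < ψ x₀ := by
      rw [← hψval, hwq]; exact Real.rpow_pos_of_pos hux q
    obtain ⟨ε, hε⟩ : ∃ ε : ℝ, ε = ψ x₀ / 2 := ⟨_, rfl⟩
    have hεpos : 0 < ε := by rw [hε]; positivity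
    have hφC : ContDiff ℝ 2 (fun y => hAux ε (ψ y) ^ p) := by
      rw [contDiff_iff_contDiffAt]
      intro y
      exact (((hAux_contDiff ε).comp hψC).contDiffAt).rpow_const_of_ne
        (ne_of_gt (hAux_pos hεpos (ψ y)))
    have hev1 : ∀ᶠ y in nhds x₀, ε ≤ ψ y :=
      hψC.continuous.continuousAt.eventually (eventually_ge_nhds (by rw [hε]; linarith))
    have hevΩ : ∀ᶠ y in nhds x₀, y ∈ Ω := hΩ.mem_nhds hx₀
    have heqφ : (fun y => hAux ε (ψ y) ^ p) =ᶠ[nhds x₀] (fun y => ψ y ^ p) := by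
      filter_upwards [hev1] with y hy
      rw [hAux_eq hεpos hy]
    have hval : u x₀ = hAux ε (ψ x₀) ^ p := by
      rw [hAux_eq hεpos (by rw [hε]; linarith), ← hψval, hwq,
        ← Real.rpow_mul hux.le, hqp, Real.rpow_one]
    have htouch : ∀ᶠ y in nhds x₀, u y ≤ hAux ε (ψ y) ^ p := by
      filter_upwards [hψle, hev1, hevΩ] with y h1 h2 h3
      rw [hAux_eq hεpos h2]
      have huy : 0 < u y := hpos y h3
      have h1' : ψ y ≤ u y ^ q := by rw [← hwq]; exact h1
      have hle : (u y ^ q) ^ p ≤ ψ y ^ p :=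
        Real.rpow_le_rpow_of_nonpos (by linarith) h1' hpneg
      calc u y = (u y ^ q) ^ p := by rw [← Real.rpow_mul huy.le, hqp, Real.rpow_one]
      _ ≤ ψ y ^ p := hle
    have hkey : AU n (fun y => hAux ε (ψ y) ^ p) x₀ = AW n ψ x₀ := by
      rw [AU_congr heqφ]
      exact AU_rpow_eq_AW hn hψC hψx hp
    have hh : (AU n (fun y => hAux ε (ψ y) ^ p) x₀).IsHermitian := by
      rw [hkey]; exact hHerm
    have hres := H x₀ hx₀ _ hφC hval htouch hh
    rwa [eig_congr hkey hh hHerm] at hres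
  · -- supersolution for w implies subsolution for u
    intro H x₀ hx₀ φ hφC hφval hφle hHerm
    have hux : 0 < u x₀ := hpos x₀ hx₀
    have hφx : 0 < φ x₀ := hφval ▸ hux
    obtain ⟨ε, hε⟩ : ∃ ε : ℝ, ε = φ x₀ / 2 := ⟨_, rfl⟩
    have hεpos : 0 < ε := by rw [hε]; positivity
    have hψC : ContDiff ℝ 2 (fun y => hAux ε (φ y) ^ q) := by
      rw [contDiff_iff_contDiffAt]
      intro y
      exact (((hAux_contDiff ε).comp hφC).contDiffAt).rpow_const_of_ne
        (ne_of_gt (hAux_pos hεpos (φ y)))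
    have hev1 : ∀ᶠ y in nhds x₀, ε ≤ φ y :=
      hφC.continuous.continuousAt.eventually (eventually_ge_nhds (by rw [hε]; linarith))
    have hevΩ : ∀ᶠ y in nhds x₀, y ∈ Ω := hΩ.mem_nhds hx₀
    have heqψ : (fun y => hAux ε (φ y) ^ q) =ᶠ[nhds x₀] (fun y => φ y ^ q) := by
      filter_upwards [hev1] with y hy
      rw [hAux_eq hεpos hy]
    have hval : w x₀ = hAux ε (φ x₀) ^ q := by
      rw [hAux_eq hεpos (by rw [hε]; linarith), hwq, hφval]
    have htouch : ∀ᶠ y in nhds x₀, hAux ε (φ y) ^ q ≤ w y := by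
      filter_upwards [hφle, hev1, hevΩ] with y h1 h2 h3
      rw [hAux_eq hεpos h2, hwq]
      exact Real.rpow_le_rpow_of_nonpos (hpos y h3) h1 hqneg
    have hkey : AU n φ x₀ = AW n (fun y => hAux ε (φ y) ^ q) x₀ := by
      have hψx : 0 < hAux ε (φ x₀) ^ q :=
        Real.rpow_pos_of_pos (hAux_pos hεpos (φ x₀)) q
      rw [← AU_rpow_eq_AW hn hψC hψx hp]
      apply AU_congr
      filter_upwards [hev1] with y hy
      rw [hAux_eq hεpos hy, ← Real.rpow_mul (le_trans hεpos.le hy), hqp, Real.rpow_one]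
    have hh : (AW n (fun y => hAux ε (φ y) ^ q) x₀).IsHermitian := by
      rw [← hkey]; exact hHerm
    have hres := H x₀ hx₀ _ hψC hval htouch hh
    rw [eig_congr hkey hHerm hh]; exact hres
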